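/- For all integers L ≥ 1 and k* ≥ L + 1: u(k*, L) ≥ 1 - L·x^⌊(k*-1)/L⌋, where x = (1-γ)p/(γ + (1-γ)(p+h)) = (1-γ)p/(1 - (1-γ)(1-(p+h))). -/

import Mathlib

open Finset

private lemma delayed_aux
    (x y z : ℝ) (hx0 : 0 ≤ x) (hy0 : 0 ≤ y) (hz0 : 0 ≤ z)
    (hsum : x + y + z = 1)
    (q : ℕ → ℕ → ℝ)
    (hq00 : q 0 0 = 1)
    (hqn0 : ∀ n, q (n + 1) 0 = x * q n 0)
    (hq0m : ∀ m, q 0 (m + 1) = z * q 0 m)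
    (hqrec : ∀ n m, q (n + 1) (m + 1) = x * q n (m + 1) + y * q n m + z * q (n + 1) m) :
    ∀ a m k, a * (m + 1) ≤ k →
      1 - (∑ n ∈ range k, q n m) * (y + z) - q k m * z ≤ ((m : ℝ) + 1) * x ^ a := by
  have hx1 : x ≤ 1 := by linarith
  -- q is nonnegative
  have hqpos : ∀ m n, 0 ≤ q n m := by
    intro m
    induction m with
    | zero =>
      intro n
      induction n with
      | zero => rw [hq00]; norm_num
      | succ n ih => rw [hqn0]; exact mul_nonneg hx0 ih
    | succ m ihm =>
      intro n
      induction n with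
      | zero => rw [hq0m]; exact mul_nonneg hz0 (ihm 0)
      | succ n ihn =>
        rw [hqrec]
        have h1 := mul_nonneg hx0 ihn
        have h2 := mul_nonneg hy0 (ihm n)
        have h3 := mul_nonneg hz0 (ihm (n+1))
        linarith
  set G : ℕ → ℕ → ℝ := fun k m => 1 - (∑ n ∈ range k, q n m) * (y + z) - q k m * z with hG
  have hSpos : ∀ k m, 0 ≤ ∑ n ∈ range k, q n m := fun k m =>
    Finset.sum_nonneg fun n _ => hqpos m n
  have hGle1 : ∀ k m, G k m ≤ 1 := by
    intro k m
    have h1 := mul_nonneg (hSpos k m) (by linarith : (0:ℝ) ≤ y + z)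
    have h2 := mul_nonneg (hqpos m k) hz0
    simp only [hG]; linarith
  -- sum recurrence
  have hSrec : ∀ k m, (∑ n ∈ range (k+1), q n (m+1)) =
      x * (∑ n ∈ range k, q n (m+1)) + y * (∑ n ∈ range k, q n m)
        + z * (∑ n ∈ range (k+1), q n m) := by
    intro k m
    rw [Finset.sum_range_succ' (fun n => q n (m+1)) k]
    simp only [hqrec, hq0m]
    rw [Finset.sum_add_distrib, Finset.sum_add_distrib,
      Finset.sum_range_succ' (fun n => q n m) k]
    simp only [← Finset.mul_sum]
    ring
  -- G recurrence
  have hGrec : ∀ k m, G (k+1) (m+1) = x * G k (m+1) + y * G k m + z * G (k+1) m := by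
    intro k m
    simp only [hG]
    rw [hSrec, hqrec]
    have hz' : z = 1 - x - y := by linarith
    rw [hz']; ring
  -- monotone in k
  have hGmono : ∀ m k k', k ≤ k' → G k' m ≤ G k m := by
    intro m k k' hkk
    induction k' with
    | zero => simp_all
    | succ k' ih =>
      rcases Nat.lt_or_ge k (k'+1) with hlt | hge
      · have h := ih (Nat.lt_succ_iff.mp hlt)
        have hstep : G (k'+1) m ≤ G k' m := by
          simp only [hG, Finset.sum_range_succ]
          have h1 := mul_nonneg (hqpos m k') hy0
          have h2 := mul_nonneg (hqpos m (k'+1)) hz0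
          have h3 := mul_nonneg (hqpos m k') hz0
          nlinarith [hqpos m k', hqpos m (k'+1)]
        linarith
      · have hkeq : k = k' + 1 := le_antisymm hkk hge
        rw [hkeq]
  -- base level
  have hq0 : ∀ n, q n 0 = x ^ n := by
    intro n
    induction n with
    | zero => simpa using hq00
    | succ n ih => rw [hqn0, ih]; ring
  have hGzero : ∀ k, G k 0 ≤ x ^ k := by
    intro k
    have hgeo : (∑ n ∈ range k, x ^ n) * (x - 1) = x ^ k - 1 := geom_sum_mul x k
    have hyz : y + z = 1 - x := by linarith
    simp only [hG, hq0, hyz]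
    have hxk : (0:ℝ) ≤ x ^ k := pow_nonneg hx0 k
    nlinarith [mul_nonneg hxk hz0]
  -- main induction
  intro a m
  induction m with
  | zero =>
    intro k hk
    have h1 : G k 0 ≤ x ^ k := hGzero k
    have h2 : x ^ k ≤ x ^ a := pow_le_pow_of_le_one hx0 hx1 (by simpa using hk)
    simp only [hG] at h1
    push_cast
    linarith
  | succ m ihm =>
    have key : ∀ i, G (a*(m+1) + i) (m+1) ≤ ((m:ℝ) + 1) * x ^ a + x ^ i := by
      intro i
      induction i with
      | zero =>
        have h1 := hGle1 (a*(m+1)) (m+1)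
        have h2 : (0:ℝ) ≤ ((m:ℝ)+1) * x ^ a := by positivity
        simpa using by linarith
      | succ i ih =>
        have heq : a*(m+1) + (i+1) = (a*(m+1) + i) + 1 := by ring
        rw [heq, hGrec]
        set A : ℝ := ((m:ℝ)+1) * x ^ a with hA
        have h1 : x * G (a*(m+1)+i) (m+1) ≤ x * (A + x ^ i) :=
          mul_le_mul_of_nonneg_left ih hx0
        have h2 : y * G (a*(m+1)+i) m ≤ y * A := by
          have := ihm (a*(m+1)+i) (Nat.le_add_right _ _)
          simp only [hG] at this ⊢
          exact mul_le_mul_of_nonneg_left (by linarith) hy0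
        have h3 : z * G (a*(m+1)+i+1) m ≤ z * A := by
          have := ihm (a*(m+1)+i+1) (le_trans (Nat.le_add_right _ _) (Nat.le_succ _))
          simp only [hG] at this ⊢
          exact mul_le_mul_of_nonneg_left (by linarith) hz0
        have hA' : x * A + y * A + z * A = A := by
          rw [← add_mul, ← add_mul, hsum, one_mul]
        have h5 : x * (A + x ^ i) = x * A + x * x ^ i := by ring
        have h6 : x ^ (i+1) = x * x ^ i := by ring
        linarith
    intro k hk
    have hk' : a*(m+1) + a ≤ k := by
      have : a * (m + 1 + 1) = a * (m+1) + a := by ring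
      omega
    have h1 : G k (m+1) ≤ G (a*(m+1) + a) (m+1) := hGmono (m+1) _ k hk'
    have h2 := key a
    simp only [hG] at h1 h2 ⊢
    push_cast
    linarith


/-- **Delayed learning: containment of initial-phase progress (Theorem 5, lower bound on `u`).**
During the no-learning phase the conditional chain has constant transition probabilities
`x` (horizontal), `y` (diagonal), `z` (vertical); `u(k*,L)` is the probability that the
attacker's progress is at most `k*` when level `L` is first reached.  Then
`u(k*,L) ≥ 1 - L·x^⌊(k*-1)/L⌋` for all integers `L ≥ 1` and `k* ≥ L+1`. -/
theorem delayed_learning_initial_phase_bound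
    (p h γ : ℝ) (hp : 0 < p) (hh : 0 ≤ h) (hph : p + h ≤ 1)
    (hγ0 : 0 < γ) (hγ1 : γ < 1)
    (x y z : ℝ)
    (hx : x = (1 - γ) * p / (γ + (1 - γ) * (p + h)))
    (hy : y = γ * p / (γ + (1 - γ) * (p + h)))
    (hz : z = 1 - x - y)
    (q : ℕ → ℕ → ℝ)
    (hq00 : q 0 0 = 1)
    (hqn0 : ∀ n, q (n + 1) 0 = x * q n 0)
    (hq0m : ∀ m, q 0 (m + 1) = z * q 0 m)
    (hqrec : ∀ n m, q (n + 1) (m + 1) = x * q n (m + 1) + y * q n m + z * q (n + 1) m)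
    (L kstar : ℕ) (hL : 1 ≤ L) (hkstar : L + 1 ≤ kstar) :
    1 - (L : ℝ) * x ^ ((kstar - 1) / L) ≤
      (∑ n ∈ Finset.range kstar, q n (L - 1)) * (y + z) + q kstar (L - 1) * z := by
  have hD : (0:ℝ) < γ + (1 - γ) * (p + h) := by nlinarith
  have hx0 : 0 ≤ x := by
    rw [hx]; exact div_nonneg (by nlinarith) hD.le
  have hy0 : 0 ≤ y := by
    rw [hy]; exact div_nonneg (by nlinarith) hD.le
  have hxy : x + y ≤ 1 := by
    rw [hx, hy, ← add_div, div_le_one hD]; nlinarith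
  have hz0 : 0 ≤ z := by rw [hz]; linarith
  have hsum : x + y + z = 1 := by rw [hz]; ring
  set a := (kstar - 1) / L with ha
  have hm1 : L - 1 + 1 = L := Nat.succ_pred_eq_of_pos hL
  have hk : a * (L - 1 + 1) ≤ kstar := by
    rw [hm1]
    calc a * L ≤ kstar - 1 := Nat.div_mul_le_self _ _
      _ ≤ kstar := Nat.sub_le _ _
  have hmain := delayed_aux x y z hx0 hy0 hz0 hsum q hq00 hqn0 hq0m hqrec a (L - 1) kstar hk
  have hcast : ((L - 1 : ℕ) : ℝ) + 1 = (L : ℝ) := by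
    rw [Nat.cast_sub hL]; push_cast; ring
  rw [hcast] at hmain
  linarith
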